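/- Let g : Y → ℝ be continuous and sublinear on a Banach space, F₀, F₁, …, F_k : X × W → Y continuous mappings that are continuously differentiable near (x̄, ū), and suppose J(x, u, α₁,…,α_k) = g(F₀(x,u) + Σ α_i F_i(x,u)) has a local minimum on X × {ū} × ℝ₊^k at (x̄, 0,…,0). Then there exists y* ∈ ∂g(F₀(x̄, ū)) such that (y* ∘ F₀)_x'(x̄, ū) = 0 and ⟨y*, F_i(x̄, ū)⟩ ≥ 0 for i = 1,…,k. -/

import Mathlib

lemma sublinear_norm_bound' {Y : Type*} [NormedAddCommGroup Y] [NormedSpace ℝ Y]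
    (g : Y → ℝ) (hgc : Continuous g)
    (hgh : ∀ c : ℝ, 0 ≤ c → ∀ y : Y, g (c • y) = c * g y) :
    ∃ C > (0:ℝ), ∀ v, g v ≤ C * ‖v‖ := by
  have hg0 : g 0 = 0 := by simpa using hgh 0 le_rfl 0
  have := hgc.continuousAt (x := 0)
  rw [Metric.continuousAt_iff] at this
  obtain ⟨δ, hδ, hball⟩ := this 1 one_pos
  refine ⟨2 / δ, by positivity, fun v => ?_⟩
  rcases eq_or_ne v 0 with rfl | hv
  · simp [hg0]
  · have hnv : (0:ℝ) < ‖v‖ := norm_pos_iff.2 hv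
    set c : ℝ := 2 * ‖v‖ / δ with hc
    have hcpos : 0 < c := by positivity
    set u : Y := c⁻¹ • v with hu
    have hun : ‖u‖ = δ / 2 := by
      rw [hu, norm_smul, norm_inv, Real.norm_eq_abs, abs_of_pos hcpos, hc]
      field_simp
    have hgu : g u ≤ 1 := by
      have := hball (x := u) (by simp [hun, dist_eq_norm]; linarith)
      rw [dist_eq_norm, hg0, sub_zero, Real.norm_eq_abs] at this
      exact (le_abs_self _).trans this.le
    have : g v = c * g u := by
      rw [← hgh c hcpos.le u, hu, smul_smul, mul_inv_cancel₀ hcpos.ne', one_smul]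
    rw [this, hc]
    rw [div_mul_eq_mul_div, div_mul_eq_mul_div, div_le_div_iff₀ hδ hδ]
    nlinarith [mul_le_mul_of_nonneg_left hgu (by positivity : (0:ℝ) ≤ 2 * ‖v‖ * δ)]

lemma sublinear_cone_subgradient {Y : Type*} [NormedAddCommGroup Y] [NormedSpace ℝ Y]
    (g : Y → ℝ) (hgc : Continuous g)
    (hgh : ∀ c : ℝ, 0 ≤ c → ∀ y : Y, g (c • y) = c * g y)
    (hga : ∀ y z : Y, g (y + z) ≤ g y + g z)
    (yb : Y) (K : Set Y) (hK0 : (0:Y) ∈ K)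
    (hKadd : ∀ w₁ ∈ K, ∀ w₂ ∈ K, w₁ + w₂ ∈ K)
    (hKsmul : ∀ c : ℝ, 0 ≤ c → ∀ w ∈ K, c • w ∈ K)
    (hA : ∀ w ∈ K, g yb ≤ g (yb + w)) :
    ∃ ys : Y →L[ℝ] ℝ, (∀ v, ys v ≤ g (yb + v) - g yb) ∧ (∀ w ∈ K, ys (-w) ≤ 0) := by
  obtain ⟨C, hC, hCg⟩ := sublinear_norm_bound' g hgc hgh
  set S : Y → Set ℝ := fun v =>
    {r : ℝ | ∃ t : ℝ, 0 < t ∧ ∃ w ∈ K, r = (g (yb + t • v + w) - g yb) / t} with hS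
  set p : Y → ℝ := fun v => sInf (S v) with hp
  have hmem : ∀ v, (g (yb + v) - g yb) ∈ S v := fun v =>
    ⟨1, one_pos, 0, hK0, by simp⟩
  have hne : ∀ v, (S v).Nonempty := fun v => ⟨_, hmem v⟩
  have hlb : ∀ v, ∀ r ∈ S v, -g (-v) ≤ r := by
    rintro v r ⟨t, ht, w, hw, rfl⟩
    rw [le_div_iff₀ ht]
    have h1 : g (yb + w) ≤ g (yb + t • v + w) + t * g (-v) := by
      have := hga (yb + t • v + w) (t • (-v))
      rw [hgh t ht.le] at this
      have he : yb + t • v + w + t • (-v) = yb + w := by module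
      rw [he] at this
      linarith
    have h2 := hA w hw
    linarith
  have hbdd : ∀ v, BddBelow (S v) := fun v => ⟨-g (-v), hlb v⟩
  have hple : ∀ v, p v ≤ g (yb + v) - g yb := fun v => csInf_le (hbdd v) (hmem v)
  have hpw : ∀ w ∈ K, p (-w) ≤ 0 := by
    intro w hw
    refine csInf_le (hbdd _) ⟨1, one_pos, w, hw, ?_⟩
    have : yb + (1:ℝ) • (-w) + w = yb := by module
    rw [this]
    simp
  have hscale : ∀ c : ℝ, 0 < c → ∀ v, p (c • v) ≤ c * p v := by
    intro c hc v
    rw [← div_le_iff₀' hc]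
    refine le_csInf (hne v) ?_
    rintro r ⟨t, ht, w, hw, rfl⟩
    rw [div_le_iff₀' hc]
    have hmem2 : c * ((g (yb + t • v + w) - g yb) / t) ∈ S (c • v) := by
      refine ⟨t / c, by positivity, w, hw, ?_⟩
      have he : yb + (t / c) • (c • v) + w = yb + t • v + w := by
        rw [smul_smul, div_mul_cancel₀ _ hc.ne']
      rw [he]
      field_simp
    exact csInf_le (hbdd _) hmem2
  have phom : ∀ c : ℝ, 0 < c → ∀ v, p (c • v) = c * p v := by
    intro c hc v
    refine le_antisymm (hscale c hc v) ?_
    have := hscale c⁻¹ (by positivity) (c • v)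
    rw [smul_smul, inv_mul_cancel₀ hc.ne', one_smul] at this
    calc c * p v ≤ c * (c⁻¹ * p (c • v)) := by
          exact mul_le_mul_of_nonneg_left this hc.le
      _ = p (c • v) := by field_simp
  have padd : ∀ v₁ v₂, p (v₁ + v₂) ≤ p v₁ + p v₂ := by
    intro v₁ v₂
    have key : ∀ r₁ ∈ S v₁, ∀ r₂ ∈ S v₂, p (v₁ + v₂) ≤ r₁ + r₂ := by
      rintro r₁ ⟨t₁, ht₁, w₁, hw₁, rfl⟩ r₂ ⟨t₂, ht₂, w₂, hw₂, rfl⟩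
      obtain ⟨t, lam, mu, ht, hlam0, hmu0, hlm, e1, e2⟩ :
          ∃ t lam mu : ℝ, 0 < t ∧ 0 < lam ∧ 0 < mu ∧ lam + mu = 1 ∧
            lam * t₁ = t ∧ mu * t₂ = t := by
        have hts : (0:ℝ) < t₁ + t₂ := by linarith
        refine ⟨t₁ * t₂ / (t₁ + t₂), t₂ / (t₁ + t₂), t₁ / (t₁ + t₂),
          by positivity, by positivity, by positivity, ?_, ?_, ?_⟩ <;>
          field_simp <;> ring
      have hw : lam • w₁ + mu • w₂ ∈ K :=
        hKadd _ (hKsmul lam hlam0.le w₁ hw₁) _ (hKsmul mu hmu0.le w₂ hw₂)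
      have heq : yb + t • (v₁ + v₂) + (lam • w₁ + mu • w₂)
          = lam • (yb + t₁ • v₁ + w₁) + mu • (yb + t₂ • v₂ + w₂) := by
        match_scalars <;> linarith [e1, e2, hlm]
      have hgle : g (yb + t • (v₁ + v₂) + (lam • w₁ + mu • w₂))
          ≤ lam * g (yb + t₁ • v₁ + w₁) + mu * g (yb + t₂ • v₂ + w₂) := by
        rw [heq]
        calc g _ ≤ g (lam • (yb + t₁ • v₁ + w₁)) + g (mu • (yb + t₂ • v₂ + w₂)) := hga _ _
          _ = _ := by rw [hgh lam hlam0.le, hgh mu hmu0.le]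
      have hmem3 : (g (yb + t • (v₁ + v₂) + (lam • w₁ + mu • w₂)) - g yb) / t ∈ S (v₁ + v₂) :=
        ⟨t, ht, _, hw, rfl⟩
      refine (csInf_le (hbdd _) hmem3).trans ?_
      have d1 : (g (yb + t₁ • v₁ + w₁) - g yb) / t₁
          = lam * (g (yb + t₁ • v₁ + w₁) - g yb) / t := by
        rw [← e1, mul_div_mul_left _ _ hlam0.ne']
      have d2 : (g (yb + t₂ • v₂ + w₂) - g yb) / t₂
          = mu * (g (yb + t₂ • v₂ + w₂) - g yb) / t := by
        rw [← e2, mul_div_mul_left _ _ hmu0.ne']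
      rw [d1, d2, ← add_div, div_le_div_iff_of_pos_right ht]
      have hyb : lam * g yb + mu * g yb = g yb := by linear_combination (g yb) * hlm
      linarith [hgle]
    have step1 : ∀ r₁ ∈ S v₁, p (v₁ + v₂) - p v₂ ≤ r₁ := by
      intro r₁ hr₁
      have : p (v₁ + v₂) - r₁ ≤ p v₂ :=
        le_csInf (hne v₂) fun r₂ hr₂ => by linarith [key r₁ hr₁ r₂ hr₂]
      linarith
    have := le_csInf (hne v₁) step1
    linarith
  -- Hahn-Banach extension
  have hp0 : 0 ≤ p 0 := by
    have := le_csInf (hne 0) (hlb 0)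
    have hg0 : g (-(0:Y)) = 0 := by simpa using hgh 0 le_rfl 0
    rw [hg0] at this
    simpa using this
  obtain ⟨f, -, hf⟩ := exists_extension_of_le_sublinear ⟨⊥, 0⟩ p
    (fun c hc x => phom c hc x) padd
    (by rintro ⟨x, hx⟩
        simp only [Submodule.mem_bot] at hx
        subst hx
        simpa using hp0)
  have hfb : ∀ v, |f v| ≤ C * ‖v‖ := by
    intro v
    have h1 : ∀ u : Y, f u ≤ C * ‖u‖ := by
      intro u
      have := (hf u).trans (hple u)
      have h2 : g (yb + u) ≤ g yb + g u := hga yb u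
      have h3 := hCg u
      linarith
    rw [abs_le]
    constructor
    · have := h1 (-v)
      rw [map_neg, norm_neg] at this
      linarith
    · exact h1 v
  refine ⟨f.mkContinuous C (fun v => by rw [Real.norm_eq_abs]; exact hfb v), ?_, ?_⟩
  · intro v
    exact (hf v).trans (hple v)
  · intro w hw
    exact (hf (-w)).trans (hpw w hw)


/-- The first-order multiplier condition (13) for the basic unconstrained
model of Section 5.1: if `J(x,u,α) = g(F₀(x,u) + Σ αᵢ Fᵢ(x,u))` has a local
minimum on `X × {ū} × ℝ₊^k` at `(x̄, ū, 0)`, then some subgradient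
`y* ∈ ∂g(F₀(x̄,ū))` annihilates the partial `x`-derivative of `y* ∘ F₀` and
pairs nonnegatively with each `Fᵢ(x̄,ū)`. -/
theorem first_order_multiplier_condition
    {X W Y : Type*} [NormedAddCommGroup X] [NormedSpace ℝ X]
    [NormedAddCommGroup W] [NormedSpace ℝ W]
    [NormedAddCommGroup Y] [NormedSpace ℝ Y]
    (g : Y → ℝ) (hgc : Continuous g)
    (hgh : ∀ c : ℝ, 0 ≤ c → ∀ y : Y, g (c • y) = c * g y)
    (hga : ∀ y z : Y, g (y + z) ≤ g y + g z)
    (k : ℕ) (F₀ : X × W → Y) (F : Fin k → X × W → Y)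
    (xb : X) (ub : W)
    (hF₀c : Continuous F₀) (hFc : ∀ i, Continuous (F i))
    (D : (X × W) →L[ℝ] Y) (hD : HasFDerivAt F₀ D (xb, ub))
    (hmin : ∃ ρ > (0:ℝ), ∀ (x : X) (a : Fin k → ℝ), (∀ i, 0 ≤ a i) →
      ‖x - xb‖ < ρ → (∀ i, a i < ρ) →
      g (F₀ (xb, ub)) ≤ g (F₀ (x, ub) + ∑ i, a i • F i (x, ub))) :
    ∃ ys : Y →L[ℝ] ℝ,
      (∀ z : Y, ys (z - F₀ (xb, ub)) ≤ g z - g (F₀ (xb, ub))) ∧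
      (∀ h : X, ys (D (h, 0)) = 0) ∧
      (∀ i : Fin k, 0 ≤ ys (F i (xb, ub))) := by
  obtain ⟨ρ, hρ, hm⟩ := hmin
  obtain ⟨C, hC, hCg⟩ := sublinear_norm_bound' g hgc hgh
  set yb : Y := F₀ (xb, ub) with hyb
  have hLip : ∀ u v : Y, g u ≤ g v + C * ‖u - v‖ := by
    intro u v
    calc g u = g (v + (u - v)) := by rw [add_sub_cancel]
      _ ≤ g v + g (u - v) := hga _ _
      _ ≤ g v + C * ‖u - v‖ := by linarith [hCg (u - v)]
  set K : Set Y := {w | ∃ (h : X) (a : Fin k → ℝ), (∀ i, 0 ≤ a i) ∧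
    w = D (h, 0) + ∑ i, a i • F i (xb, ub)} with hK
  have hK0 : (0:Y) ∈ K := ⟨0, 0, fun i => le_rfl, by simp; exact (map_zero D).symm⟩
  have hKadd : ∀ w₁ ∈ K, ∀ w₂ ∈ K, w₁ + w₂ ∈ K := by
    rintro w₁ ⟨h₁, a₁, ha₁, rfl⟩ w₂ ⟨h₂, a₂, ha₂, rfl⟩
    refine ⟨h₁ + h₂, a₁ + a₂, fun i => add_nonneg (ha₁ i) (ha₂ i), ?_⟩
    have : ((h₁ + h₂ : X), (0:W)) = ((h₁, 0) : X × W) + (h₂, 0) := by simp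
    rw [this, map_add]
    simp only [Pi.add_apply, add_smul, Finset.sum_add_distrib]
    abel
  have hKsmul : ∀ c : ℝ, 0 ≤ c → ∀ w ∈ K, c • w ∈ K := by
    rintro c hc w ⟨h, a, ha, rfl⟩
    refine ⟨c • h, c • a, fun i => mul_nonneg hc (ha i), ?_⟩
    have : ((c • h : X), (0:W)) = c • ((h, 0) : X × W) := by simp
    rw [this, map_smul]
    simp only [Pi.smul_apply, smul_eq_mul, mul_smul, smul_add, Finset.smul_sum]
  -- the key analytic fact
  have hA : ∀ w ∈ K, g yb ≤ g (yb + w) := by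
    rintro w ⟨h, a, ha, rfl⟩
    set w' : Y := D (h, 0) + ∑ i, a i • F i (xb, ub) with hw'
    set φ : ℝ → Y := fun t => F₀ (xb + t • h, ub) + ∑ i, (t * a i) • F i (xb + t • h, ub)
      with hφdef
    have hφ0 : φ 0 = yb := by simp [hφdef, hyb]
    have hcurve : HasDerivAt (fun t : ℝ => ((xb + t • h, ub) : X × W)) ((h, 0) : X × W) 0 := by
      apply HasDerivAt.prodMk
      · simpa using ((hasDerivAt_id (0:ℝ)).smul_const h).const_add xb
      · exact hasDerivAt_const 0 ub
    have hcurvec : Continuous (fun t : ℝ => ((xb + t • h, ub) : X × W)) :=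
      (continuous_const.add (continuous_id.smul continuous_const)).prodMk continuous_const
    have hd0 : HasDerivAt (fun t : ℝ => F₀ (xb + t • h, ub)) (D (h, 0)) 0 := by
      have h' : HasFDerivAt F₀ D ((xb + (0:ℝ) • h, ub)) := by simpa using hD
      exact h'.comp_hasDerivAt 0 hcurve
    have hdi : ∀ i, HasDerivAt (fun t : ℝ => (t * a i) • F i (xb + t • h, ub))
        (a i • F i (xb, ub)) 0 := by
      intro i
      rw [hasDerivAt_iff_tendsto_slope]
      have hχ : Filter.Tendsto (fun t : ℝ => a i • F i (xb + t • h, ub)) (nhdsWithin 0 {(0:ℝ)}ᶜ)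
          (nhds (a i • F i (xb, ub))) := by
        have hcont : Continuous (fun t : ℝ => a i • F i (xb + t • h, ub)) :=
          ((hFc i).comp hcurvec).const_smul _
        have h0 := hcont.tendsto 0
        simp only [zero_smul, add_zero] at h0
        exact h0.mono_left nhdsWithin_le_nhds
      refine hχ.congr' ?_
      filter_upwards [self_mem_nhdsWithin] with t (ht : t ≠ 0)
      rw [slope_def_module]
      simp only [mul_zero, zero_smul, sub_zero, zero_mul, smul_smul]
      congr 1
      field_simp
    have hφd : HasDerivAt φ w' 0 := by
      rw [hw']
      exact hd0.add (HasDerivAt.fun_sum (fun i _ => hdi i))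
    -- suffices to show the inequality up to every ε
    have key : ∀ ε : ℝ, 0 < ε → g yb ≤ g (yb + w') + ε := by
      intro ε hε
      have hlo := hφd.isLittleO
      rw [Asymptotics.isLittleO_iff] at hlo
      have hεC : 0 < ε / C := by positivity
      have h1 : ∀ᶠ t : ℝ in nhdsWithin 0 (Set.Ioi 0),
          ‖φ t - φ 0 - (t - 0) • w'‖ ≤ ε / C * ‖t - 0‖ :=
        (hlo hεC).filter_mono nhdsWithin_le_nhds
      have h2 : ∀ᶠ t : ℝ in nhdsWithin 0 (Set.Ioi 0), ‖(xb + t • h) - xb‖ < ρ := by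
        have hcont : Continuous (fun t : ℝ => ‖(xb + t • h) - xb‖) :=
          ((continuous_const.add (continuous_id.smul continuous_const)).sub
            continuous_const).norm
        have h0 := (hcont.tendsto 0).mono_left (nhdsWithin_le_nhds (s := Set.Ioi (0:ℝ)))
        have hval : ‖xb + (0:ℝ) • h - xb‖ = 0 := by simp
        rw [hval] at h0
        exact h0.eventually_lt_const hρ
      have h3 : ∀ᶠ t : ℝ in nhdsWithin 0 (Set.Ioi 0), ∀ i, t * a i < ρ := by
        rw [Filter.eventually_all]
        intro i
        have hcont : Continuous (fun t : ℝ => t * a i) := continuous_mul_right _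
        have h0 := (hcont.tendsto 0).mono_left (nhdsWithin_le_nhds (s := Set.Ioi (0:ℝ)))
        have hval : (0:ℝ) * a i = 0 := by simp
        rw [hval] at h0
        exact h0.eventually_lt_const hρ
      have h4 : ∀ᶠ t : ℝ in nhdsWithin 0 (Set.Ioi 0), t ∈ Set.Ioc (0:ℝ) 1 := by
        have : Set.Ioc (0:ℝ) 1 ∈ nhdsWithin 0 (Set.Ioi 0) := by
          apply Ioc_mem_nhdsGT_of_mem
          constructor <;> norm_num
        exact this
      obtain ⟨t, hbig, ht01⟩ := ((h1.and (h2.and h3)).and h4).exists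
      obtain ⟨hE, hxρ, haρ⟩ := hbig
      obtain ⟨ht0, ht1⟩ := ht01
      -- apply the minimality
      have hmin' : g yb ≤ g (φ t) := by
        have := hm (xb + t • h) (fun i => t * a i)
          (fun i => mul_nonneg ht0.le (ha i)) hxρ haρ
        exact this
      -- error bound
      have hEt : ‖φ t - (yb + t • w')‖ ≤ ε / C * t := by
        have : φ t - (yb + t • w') = φ t - φ 0 - (t - 0) • w' := by
          rw [hφ0]; abel_nf
        rw [this]
        calc ‖φ t - φ 0 - (t - 0) • w'‖ ≤ ε / C * ‖t - 0‖ := hE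
          _ = ε / C * t := by rw [sub_zero, Real.norm_eq_abs, abs_of_pos ht0]
      have hstep : g yb ≤ g (yb + t • w') + ε * t := by
        have l1 : g (φ t) ≤ g (yb + t • w') + C * ‖φ t - (yb + t • w')‖ := hLip _ _
        have l2 : C * ‖φ t - (yb + t • w')‖ ≤ C * (ε / C * t) :=
          mul_le_mul_of_nonneg_left hEt hC.le
        have l3 : C * (ε / C * t) = ε * t := by field_simp
        linarith
      -- convexity in t
      have hconv : g (yb + t • w') ≤ t * g (yb + w') + (1 - t) * g yb := by
        have hsplit : yb + t • w' = t • (yb + w') + (1 - t) • yb := by module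
        rw [hsplit]
        calc g _ ≤ g (t • (yb + w')) + g ((1 - t) • yb) := hga _ _
          _ = t * g (yb + w') + (1 - t) * g yb := by
              rw [hgh t ht0.le, hgh (1 - t) (by linarith)]
      -- combine
      nlinarith [hstep, hconv, ht0, mul_le_mul_of_nonneg_left ht1 hε.le]
    by_contra hcon
    push_neg at hcon
    have := key ((g yb - g (yb + w')) / 2) (by linarith)
    linarith
  obtain ⟨ys, hys1, hys2⟩ := sublinear_cone_subgradient g hgc hgh hga yb K hK0 hKadd hKsmul hA
  refine ⟨ys, ?_, ?_, ?_⟩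
  · intro z
    have := hys1 (z - yb)
    rwa [add_sub_cancel] at this
  · intro h
    have hin : D (h, 0) ∈ K := ⟨h, 0, fun i => le_rfl, by simp⟩
    have hin' : -D (h, 0) ∈ K := by
      refine ⟨-h, 0, fun i => le_rfl, ?_⟩
      have : ((-h : X), (0:W)) = -((h, 0) : X × W) := by simp
      rw [this, map_neg]
      simp
    have h1 := hys2 _ hin
    have h2 := hys2 _ hin'
    rw [neg_neg] at h2
    rw [map_neg] at h1
    linarith
  · intro i
    have hin : F i (xb, ub) ∈ K := by
      refine ⟨0, Pi.single i 1, fun j => ?_, ?_⟩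
      · rcases eq_or_ne j i with rfl | hj
        · simp
        · simp [Pi.single_eq_of_ne hj]
      · have hsum : ∑ j, (Pi.single i 1 : Fin k → ℝ) j • F j (xb, ub) = F i (xb, ub) := by
          rw [Finset.sum_eq_single i]
          · simp
          · intro b _ hb
            simp [Pi.single_eq_of_ne hb]
          · simp
        have h00 : D ((0:X), (0:W)) = 0 := by
          have he : ((0:X), (0:W)) = (0 : X × W) := rfl
          rw [he, map_zero]
        rw [hsum, h00, zero_add]
    have := hys2 _ hin
    rw [map_neg] at this
    linarith
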